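/- Let Γ₁, …, Γₙ be nonzero real numbers and let s₁, …, sₙ be pairwise distinct unit vectors in ℝ³ forming a fixed point of the n-vortex problem on the round unit sphere, i.e. satisfying Σ_{j≠i} Γⱼ (sⱼ × sᵢ)/‖sᵢ − sⱼ‖² = 0 for every index i. Then Σ_{1≤i<j≤n} ΓᵢΓⱼ (sᵢ + sⱼ) = 0 in ℝ³. -/

import Mathlib

open scoped RealInnerProductSpace

/-- The cross product on `ℝ³` viewed as the Euclidean space `EuclideanSpace ℝ (Fin 3)`. -/
noncomputable def cross (u v : EuclideanSpace ℝ (Fin 3)) : EuclideanSpace ℝ (Fin 3) :=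
  (WithLp.equiv 2 (Fin 3 → ℝ)).symm
    (crossProduct ((WithLp.equiv 2 (Fin 3 → ℝ)) u) ((WithLp.equiv 2 (Fin 3 → ℝ)) v))

noncomputable def crossL (u : EuclideanSpace ℝ (Fin 3)) :
    EuclideanSpace ℝ (Fin 3) →ₗ[ℝ] EuclideanSpace ℝ (Fin 3) :=
  (WithLp.linearEquiv 2 ℝ (Fin 3 → ℝ)).symm.toLinearMap ∘ₗ
    (crossProduct ((WithLp.equiv 2 (Fin 3 → ℝ)) u)) ∘ₗ
    (WithLp.linearEquiv 2 ℝ (Fin 3 → ℝ)).toLinearMap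

lemma crossL_apply (u v : EuclideanSpace ℝ (Fin 3)) : crossL u v = cross u v := rfl

lemma cross_zero (u : EuclideanSpace ℝ (Fin 3)) : cross u 0 = 0 := by
  have : crossL u 0 = 0 := map_zero _
  rw [crossL_apply] at this
  exact this

lemma scal_aux (a b c : ℝ) (h : 1 - c ≠ 0) : 2 * a * b / (2 * (1 - c)) * (1 - c) = a * b := by
  field_simp

lemma norm_sq_sum (u : EuclideanSpace ℝ (Fin 3)) (h : ‖u‖ = 1) :
    u 0 ^ 2 + u 1 ^ 2 + u 2 ^ 2 = 1 := by
  have := EuclideanSpace.norm_eq u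
  rw [h] at this
  have h2 : (1:ℝ) = Real.sqrt (∑ i, ‖u i‖ ^ 2) := this
  have h3 : (∑ i : Fin 3, ‖u i‖ ^ 2) = 1 := by
    have hnn : (0:ℝ) ≤ ∑ i : Fin 3, ‖u i‖ ^ 2 := Finset.sum_nonneg fun _ _ => sq_nonneg _
    nlinarith [Real.sq_sqrt hnn]
  simpa [Fin.sum_univ_three, Real.norm_eq_abs, sq_abs] using h3

set_option linter.unreachableTactic false in
set_option linter.unusedTactic false in
lemma cross_triple (u v : EuclideanSpace ℝ (Fin 3)) (h : ‖u‖ = 1) :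
    cross u (cross v u) = v - ⟪u, v⟫ • u := by
  have hn := norm_sq_sum u h
  have hi : ⟪u, v⟫ = u 0 * v 0 + u 1 * v 1 + u 2 * v 2 := by
    simp [PiLp.inner_apply, Fin.sum_univ_three, RCLike.inner_apply]
    ring
  ext i
  fin_cases i <;>
    simp [cross, cross_apply, hi, PiLp.toLp_apply, WithLp.equiv_apply, WithLp.equiv_symm_apply,
      PiLp.sub_apply, PiLp.smul_apply, smul_eq_mul] <;>
    first
      | linear_combination v 0 * hn
      | linear_combination v 1 * hn
      | linear_combination v 2 * hn
      | linear_combination (v 1 - v 0) * hn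
      | linear_combination (v 2 - v 0) * hn
      | ring

/-- If pairwise distinct unit vectors `s i ∈ ℝ³` with nonzero vorticities
`Γ i` form a fixed point of the n-vortex problem on the round unit sphere, i.e.
`∑_{j ≠ i} Γ j (s j × s i)/‖s i − s j‖² = 0` for all `i`, then
`∑_{i<j} Γ i Γ j (s i + s j) = 0`. -/
theorem stmt11 (n : ℕ) (Γ : Fin n → ℝ) (hΓ : ∀ i, Γ i ≠ 0)
    (s : Fin n → EuclideanSpace ℝ (Fin 3)) (hs : ∀ i, ‖s i‖ = 1)
    (hdist : ∀ i j, i ≠ j → s i ≠ s j)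
    (hfix : ∀ i, ∑ j ∈ Finset.univ.erase i,
        (Γ j / ‖s i - s j‖ ^ 2) • cross (s j) (s i) = 0) :
    ∑ i, ∑ j ∈ Finset.univ.filter (fun j => i < j), (Γ i * Γ j) • (s i + s j) = 0 := by
  classical
  have hd : ∀ i j, ‖s i - s j‖ ^ 2 = 2 * (1 - ⟪s i, s j⟫) := by
    intro i j
    have := @norm_sub_sq_real (EuclideanSpace ℝ (Fin 3)) _ _ (s i) (s j)
    rw [hs i, hs j] at this
    rw [this]; ring
  have hdne : ∀ i j, i ≠ j → ‖s i - s j‖ ^ 2 ≠ 0 := by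
    intro i j hij
    exact pow_ne_zero _ (norm_ne_zero_iff.mpr (sub_ne_zero.mpr (hdist i j hij)))
  have key : ∀ i, ∑ j ∈ Finset.univ.erase i,
      ((2 * Γ i * Γ j / ‖s i - s j‖ ^ 2) • (s j - s i) + (Γ i * Γ j) • s i) = 0 := by
    intro i
    have h1 : ∑ j ∈ Finset.univ.erase i,
        (Γ j / ‖s i - s j‖ ^ 2) • cross (s i) (cross (s j) (s i)) = 0 := by
      have := congrArg (crossL (s i)) (hfix i)
      simpa [map_sum, map_smul, crossL_apply, cross_zero] using this
    have h2 : ∑ j ∈ Finset.univ.erase i,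
        (Γ j / ‖s i - s j‖ ^ 2) • (s j - ⟪s i, s j⟫ • s i) = 0 := by
      rw [← h1]
      exact Finset.sum_congr rfl fun j hj => by rw [cross_triple (s i) (s j) (hs i)]
    have h3 := congrArg (fun x => (2 * Γ i) • x) h2
    simp only [Finset.smul_sum, smul_zero] at h3
    rw [← h3]
    refine Finset.sum_congr rfl fun j hj => ?_
    have hij : i ≠ j := (Finset.ne_of_mem_erase hj).symm
    have hne := hdne i j hij
    have hdij := hd i j
    have hinner : (1 : ℝ) - ⟪s i, s j⟫ ≠ 0 := by
      intro h
      apply hne; rw [hdij, h, mul_zero]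
    have e1 : (2 * Γ i) • ((Γ j / ‖s i - s j‖ ^ 2) • (s j - ⟪s i, s j⟫ • s i))
        = (2 * Γ i * Γ j / ‖s i - s j‖ ^ 2) • (s j - ⟪s i, s j⟫ • s i) := by
      rw [smul_smul]; ring_nf
    rw [e1]
    have e2 : s j - ⟪s i, s j⟫ • s i = (s j - s i) + (1 - ⟪s i, s j⟫) • s i := by
      rw [sub_smul, one_smul]; abel
    rw [e2, smul_add, smul_smul]
    congr 2
    rw [hdij]
    exact (scal_aux _ _ _ hinner).symm
  have htot : ∑ i, ∑ j ∈ Finset.univ.erase i,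
      ((2 * Γ i * Γ j / ‖s i - s j‖ ^ 2) • (s j - s i) + (Γ i * Γ j) • s i) = 0 := by
    simp [key]
  rw [Finset.sum_congr rfl (fun i _ => Finset.sum_add_distrib), Finset.sum_add_distrib] at htot
  set f : Fin n → Fin n → EuclideanSpace ℝ (Fin 3) :=
    fun i j => (2 * Γ i * Γ j / ‖s i - s j‖ ^ 2) • (s j - s i) with hf
  have hfdiag : ∀ i, f i i = 0 := by intro i; simp [hf]
  have hanti : ∀ i j, f j i = -f i j := by
    intro i j
    simp only [hf]
    rw [norm_sub_rev, ← smul_neg, neg_sub]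
    congr 1
    ring
  have hA : ∑ i, ∑ j ∈ Finset.univ.erase i, f i j = 0 := by
    have hfull : ∑ i, ∑ j ∈ Finset.univ.erase i, f i j = ∑ i, ∑ j, f i j :=
      Finset.sum_congr rfl fun i _ => Finset.sum_erase _ (hfdiag i)
    have hswap : ∑ i, ∑ j : Fin n, f i j = ∑ i, ∑ j : Fin n, f j i := Finset.sum_comm
    have hneg : ∑ i, ∑ j : Fin n, f i j = -∑ i, ∑ j : Fin n, f i j := by
      nth_rewrite 1 [hswap]
      calc ∑ i, ∑ j : Fin n, f j i = ∑ i, ∑ j : Fin n, -(f i j) :=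
            Finset.sum_congr rfl fun i _ => Finset.sum_congr rfl fun j _ => hanti i j
        _ = -∑ i, ∑ j : Fin n, f i j := by
            simp [Finset.sum_neg_distrib]
    set x := ∑ i, ∑ j : Fin n, f i j with hx
    have h2x : (2 : ℝ) • x = 0 := by
      rw [two_smul]
      nth_rewrite 2 [hneg]
      simp
    have hz : x = 0 := (smul_eq_zero.mp h2x).resolve_left (by norm_num)
    rw [hfull, hz]
  rw [hA, zero_add] at htot
  -- htot : ∑ i, ∑ j ∈ erase i, (Γ i * Γ j) • s i = 0
  -- now identify the target with this sum
  have htarget : ∑ i, ∑ j ∈ Finset.univ.filter (fun j => i < j), (Γ i * Γ j) • (s i + s j)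
      = ∑ i, ∑ j ∈ Finset.univ.erase i, (Γ i * Γ j) • s i := by
    have step1 : ∀ i : Fin n, ∑ j ∈ Finset.univ.filter (fun j => i < j), (Γ i * Γ j) • (s i + s j)
        = (∑ j, if i < j then (Γ i * Γ j) • s i else 0)
          + (∑ j, if i < j then (Γ i * Γ j) • s j else 0) := by
      intro i
      rw [← Finset.sum_add_distrib, Finset.sum_filter]
      refine Finset.sum_congr rfl fun j _ => ?_
      split_ifs with h
      · rw [smul_add]
      · simp
    rw [Finset.sum_congr rfl (fun i _ => step1 i), Finset.sum_add_distrib]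
    have step2 : ∑ i, ∑ j, (if i < j then (Γ i * Γ j) • s j else 0)
        = ∑ i, ∑ j, (if j < i then (Γ i * Γ j) • s i else 0) := by
      rw [Finset.sum_comm]
      refine Finset.sum_congr rfl fun i _ => Finset.sum_congr rfl fun j _ => ?_
      split_ifs with h
      · rw [mul_comm]
      · rfl
    rw [step2, ← Finset.sum_add_distrib]
    refine Finset.sum_congr rfl fun i _ => ?_
    rw [← Finset.sum_add_distrib,
      show Finset.univ.erase i = Finset.univ.filter (· ≠ i) from (Finset.filter_ne' _ _).symm,
      Finset.sum_filter]
    refine Finset.sum_congr rfl fun j _ => ?_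
    rcases lt_trichotomy i j with h | h | h
    · simp [h, not_lt.mpr h.le, h.ne']
    · simp [h]
    · simp [h, not_lt.mpr h.le, h.ne]
  rw [htarget, htot]
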